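/- Fix x̄ ∈ ℝ^n and an index tuple a = (a_1, …, a_ω), and let u ∈ ℝ^n be the unique minimizer of d ↦ 𝓕^a(x̄, d) + ½‖d‖² over ℝ^n. (i) If for every d ∈ ℝ^n there exists j ∈ {1,…,ω} with ∇f^{a_j}(x̄)ᵀd ∉ −int(K), then u = 0 and the minimum value is 0. (ii) If there exists d ∈ ℝ^n with ∇f^{a_j}(x̄)ᵀd ∈ −int(K) for all j ∈ {1,…,ω}, then u ≠ 0, the minimum value is < 0, and 𝓕^a(x̄, u) < −½‖u‖². -/

import Mathlib

open Set Pointwise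

/-- `𝓕^a(x, d) = max_{1 ≤ j ≤ ω} ψ_e(∇f^{a_j}(x)ᵀ d)`. -/
noncomputable def Fcal {n m p : ℕ} (ψ : EuclideanSpace ℝ (Fin m) → ℝ)
    (f : Fin p → EuclideanSpace ℝ (Fin n) → EuclideanSpace ℝ (Fin m))
    {ω : ℕ} (hω : 0 < ω) (a : Fin ω → Fin p)
    (x d : EuclideanSpace ℝ (Fin n)) : ℝ :=
  Finset.univ.sup' (Finset.univ_nonempty_iff.mpr ⟨⟨0, hω⟩⟩) fun j =>
    ψ (fderiv ℝ (f (a j)) x d)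

/-- Let `u` be the unique minimizer of `d ↦ 𝓕^a(x̄, d) + ½‖d‖²`.
(i) If for every `d` there is `j` with `∇f^{a_j}(x̄)ᵀd ∉ -int K`, then `u = 0` and
the minimum value is `0`. (ii) If there is `d` with `∇f^{a_j}(x̄)ᵀd ∈ -int K` for all
`j`, then `u ≠ 0`, the minimum value is `< 0`, and `𝓕^a(x̄, u) < -½‖u‖²`. -/
theorem statement8 {n m p : ℕ} (K : Set (EuclideanSpace ℝ (Fin m)))
    (hKne : K.Nonempty) (hKclosed : IsClosed K) (hKconv : Convex ℝ K)
    (hKcone : ∀ t : ℝ, 0 ≤ t → ∀ y ∈ K, t • y ∈ K)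
    (hKpointed : K ∩ (-K) = {0}) (hKsolid : (interior K).Nonempty)
    (e : EuclideanSpace ℝ (Fin m)) (he : e ∈ interior K)
    (ψ : EuclideanSpace ℝ (Fin m) → ℝ)
    (hψ : ∀ y, IsLeast {t : ℝ | t • e - y ∈ K} (ψ y))
    (f : Fin p → EuclideanSpace ℝ (Fin n) → EuclideanSpace ℝ (Fin m))
    (hf : ∀ i, ContDiff ℝ 1 (f i))
    {ω : ℕ} (hω : 0 < ω) (a : Fin ω → Fin p)
    (xb : EuclideanSpace ℝ (Fin n)) (u : EuclideanSpace ℝ (Fin n))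
    (hu : ∀ d, Fcal ψ f hω a xb u + (1 / 2) * ‖u‖ ^ 2 ≤
      Fcal ψ f hω a xb d + (1 / 2) * ‖d‖ ^ 2) :
    ((∀ d : EuclideanSpace ℝ (Fin n), ∃ j : Fin ω,
        fderiv ℝ (f (a j)) xb d ∉ -(interior K)) →
      u = 0 ∧ Fcal ψ f hω a xb u + (1 / 2) * ‖u‖ ^ 2 = 0) ∧
    ((∃ d : EuclideanSpace ℝ (Fin n), ∀ j : Fin ω,
        fderiv ℝ (f (a j)) xb d ∈ -(interior K)) →
      u ≠ 0 ∧ Fcal ψ f hω a xb u + (1 / 2) * ‖u‖ ^ 2 < 0 ∧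
      Fcal ψ f hω a xb u < -((1 / 2) * ‖u‖ ^ 2)) := by
  classical
  -- basic cone facts
  have hK0 : (0 : EuclideanSpace ℝ (Fin m)) ∈ K := by
    obtain ⟨y, hy⟩ := hKne
    simpa using hKcone 0 le_rfl y hy
  have hadd : ∀ w z : EuclideanSpace ℝ (Fin m), w ∈ K → z ∈ K → w + z ∈ K := by
    intro w z hw hz
    have h := hKconv hw hz (by norm_num : (0:ℝ) ≤ 1/2) (by norm_num : (0:ℝ) ≤ 1/2)
      (by norm_num)
    have h2 := hKcone 2 (by norm_num) _ h
    convert h2 using 1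
    module
  have heK : e ∈ K := interior_subset he
  have hene : e ≠ 0 := by
    intro h
    have h1 : ψ 0 ≤ ψ 0 - 1 := (hψ 0).2
      (show ψ 0 - 1 ∈ {t : ℝ | t • e - (0:EuclideanSpace ℝ (Fin m)) ∈ K} by simp [h, hK0])
    linarith
  have hψ0 : ψ 0 = 0 := by
    have hle : ψ 0 ≤ 0 := (hψ 0).2 (by simp [hK0])
    rcases eq_or_lt_of_le hle with h | h
    · exact h
    · exfalso
      have hm : (ψ 0) • e ∈ K := by simpa using (hψ 0).1
      have hm2 : (ψ 0) • e ∈ -K := by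
        rw [Set.mem_neg]
        have := hKcone (-(ψ 0)) (by linarith) e heK
        simpa [neg_smul] using this
      have hz : (ψ 0) • e = 0 := by
        have : (ψ 0) • e ∈ K ∩ (-K) := ⟨hm, hm2⟩
        rw [hKpointed] at this
        simpa using this
      rcases smul_eq_zero.mp hz with h' | h'
      · exact absurd h' (ne_of_lt h)
      · exact hene h'
  -- positive homogeneity of ψ
  have hhom : ∀ t : ℝ, 0 < t → ∀ y, ψ (t • y) = t * ψ y := by
    intro t ht y
    have h1 : ψ (t • y) ≤ t * ψ y := by
      apply (hψ (t • y)).2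
      have := hKcone t ht.le _ (hψ y).1
      show (t * ψ y) • e - t • y ∈ K
      rw [smul_sub, smul_smul] at this
      exact this
    have h2 : ψ y ≤ t⁻¹ * ψ (t • y) := by
      apply (hψ y).2
      have := hKcone t⁻¹ (by positivity) _ (hψ (t • y)).1
      show (t⁻¹ * ψ (t • y)) • e - y ∈ K
      rw [smul_sub, smul_smul, smul_smul, inv_mul_cancel₀ ht.ne', one_smul] at this
      exact this
    have h3 : t * ψ y ≤ ψ (t • y) := by
      have := mul_le_mul_of_nonneg_left h2 ht.le
      rwa [← mul_assoc, mul_inv_cancel₀ ht.ne', one_mul] at this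
    linarith
  -- k + s • e lies in the interior for k ∈ K, s > 0
  have hintmem : ∀ k ∈ K, ∀ s : ℝ, 0 < s → k + s • e ∈ interior K := by
    intro k hk s hs
    have hcont : Continuous fun w : EuclideanSpace ℝ (Fin m) => s⁻¹ • (w - k) :=
      by fun_prop
    have hopen : IsOpen ((fun w : EuclideanSpace ℝ (Fin m) => s⁻¹ • (w - k)) ⁻¹' interior K) :=
      isOpen_interior.preimage hcont
    have hsub : (fun w : EuclideanSpace ℝ (Fin m) => s⁻¹ • (w - k)) ⁻¹' interior K ⊆ K := by
      intro w hw
      have h1 : s⁻¹ • (w - k) ∈ K := interior_subset hw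
      have h2 : s • (s⁻¹ • (w - k)) ∈ K := hKcone s hs.le _ h1
      rw [smul_smul, mul_inv_cancel₀ hs.ne', one_smul] at h2
      have := hadd _ _ h2 hk
      simpa using this
    have hmem : k + s • e ∈ (fun w : EuclideanSpace ℝ (Fin m) => s⁻¹ • (w - k)) ⁻¹' interior K := by
      show s⁻¹ • (k + s • e - k) ∈ interior K
      have : s⁻¹ • (k + s • e - k) = e := by
        rw [add_sub_cancel_left, smul_smul, inv_mul_cancel₀ hs.ne', one_smul]
      rw [this]; exact he
    exact interior_maximal hsub hopen hmem
  -- ψ is nonnegative off -int K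
  have hnonneg : ∀ y, y ∉ -(interior K) → 0 ≤ ψ y := by
    intro y hy
    by_contra h
    push_neg at h
    apply hy
    rw [Set.mem_neg]
    have hmem := hintmem _ (hψ y).1 (-(ψ y)) (by linarith)
    have heq : (ψ y) • e - y + (-(ψ y)) • e = -y := by module
    rwa [heq] at hmem
  -- ψ is negative on -int K
  have hneg : ∀ y, y ∈ -(interior K) → ψ y < 0 := by
    intro y hy
    rw [Set.mem_neg] at hy
    have hcont : Continuous fun t : ℝ => -y - t • e :=
      continuous_const.sub (continuous_id.smul continuous_const)
    have hmem : (fun t : ℝ => -y - t • e) ⁻¹' interior K ∈ nhds (0:ℝ) := by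
      apply (isOpen_interior.preimage hcont).mem_nhds
      show -y - (0:ℝ) • e ∈ interior K
      simpa using hy
    obtain ⟨δ, hδ, hball⟩ := Metric.mem_nhds_iff.mp hmem
    have hm : -y - (δ/2) • e ∈ interior K := by
      apply hball
      show dist (δ/2) (0:ℝ) < δ
      rw [Real.dist_eq, sub_zero, abs_of_pos (by linarith : (0:ℝ) < δ/2)]
      linarith
    have hle : ψ y ≤ -(δ/2) := by
      apply (hψ y).2
      show (-(δ/2)) • e - y ∈ K
      have : (-(δ/2)) • e - y = -y - (δ/2) • e := by module
      rw [this]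
      exact interior_subset hm
    linarith
  -- value at 0
  have hF0 : Fcal ψ f hω a xb 0 = 0 := by
    unfold Fcal
    simp [hψ0]
  constructor
  · -- part (i)
    intro hcase
    have h1 : Fcal ψ f hω a xb u + (1/2) * ‖u‖ ^ 2 ≤ 0 := by
      have := hu 0
      rw [hF0] at this
      simpa using this
    have h2 : 0 ≤ Fcal ψ f hω a xb u := by
      obtain ⟨j, hj⟩ := hcase u
      have h3 := hnonneg _ hj
      have h4 : ψ (fderiv ℝ (f (a j)) xb u) ≤ Fcal ψ f hω a xb u := by
        unfold Fcal
        exact Finset.le_sup' (fun j => ψ (fderiv ℝ (f (a j)) xb u)) (Finset.mem_univ j)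
      linarith
    have h5 : ‖u‖ ^ 2 = 0 := le_antisymm (by linarith) (sq_nonneg _)
    have hu0 : u = 0 := by
      rw [pow_eq_zero_iff (by norm_num : 2 ≠ 0)] at h5
      exact norm_eq_zero.mp h5
    subst hu0
    simp [hF0]
  · -- part (ii)
    rintro ⟨d, hd⟩
    have hFd : Fcal ψ f hω a xb d < 0 := by
      unfold Fcal
      rw [Finset.sup'_lt_iff]
      intro j _
      exact hneg _ (hd j)
    set c : ℝ := Fcal ψ f hω a xb d with hc
    set b : ℝ := ‖d‖ with hb
    set t : ℝ := min 1 (-c / (b ^ 2 + 2)) with htdef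
    have hbpos : (0:ℝ) < b ^ 2 + 2 := by positivity
    have ht0 : 0 < t := lt_min one_pos (div_pos (by linarith) hbpos)
    have ht1 : t ≤ 1 := min_le_left _ _
    have ht2 : t * (b ^ 2 + 2) ≤ -c := by
      have := min_le_right 1 (-c / (b ^ 2 + 2))
      calc t * (b ^ 2 + 2) ≤ (-c / (b ^ 2 + 2)) * (b ^ 2 + 2) := by
            exact mul_le_mul_of_nonneg_right this hbpos.le
        _ = -c := by field_simp
    have hFtd : Fcal ψ f hω a xb (t • d) = t * c := by
      have e1 : ∀ j : Fin ω, ψ (fderiv ℝ (f (a j)) xb (t • d))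
          = t * ψ (fderiv ℝ (f (a j)) xb d) := by
        intro j
        rw [map_smul]
        exact hhom t ht0 _
      unfold Fcal
      simp only [e1]
      rw [hc]
      unfold Fcal
      exact (Finset.comp_sup'_eq_sup'_comp _ (fun x : ℝ => t * x)
        (fun x y => mul_max_of_nonneg x y ht0.le)).symm
    have hkey := hu (t • d)
    rw [hFtd] at hkey
    have hnorm : ‖t • d‖ = t * b := by
      rw [norm_smul, Real.norm_eq_abs, abs_of_pos ht0]
    rw [hnorm] at hkey
    have hlt : t * c + (1/2) * (t * b) ^ 2 < 0 := by
      nlinarith [mul_le_mul_of_nonneg_left ht2 ht0.le,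
        mul_neg_of_pos_of_neg ht0 hFd, mul_pos ht0 ht0]
    have hval : Fcal ψ f hω a xb u + (1/2) * ‖u‖ ^ 2 < 0 := lt_of_le_of_lt hkey hlt
    refine ⟨?_, hval, by linarith⟩
    intro h0
    rw [h0, hF0] at hval
    simp at hval
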